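/- Suppose 𝒳 is a finite alphabet and each p_{θ,k} assigns positive probability to every element of 𝒳. Then for every x^n ∈ 𝒳^n and every fixed σ ∈ S_{n,λ}, the mixture likelihood ratio equals the type-class probability ratio: (Σ_{σ'∈S_{n,λ}} ℙ_{1,σ'}({x^n})) / (Σ_{σ'∈S_{n,λ}} ℙ_{0,σ'}({x^n})) = ℙ_{1,σ}(T(Π_{x^n})) / ℙ_{0,σ}(T(Π_{x^n})), where Π_{x^n} is the empirical distribution of x^n and T(Π_{x^n}) ⊆ 𝒳^n is its type class (the set of sequences with the same empirical distribution as x^n). -/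

import Mathlib

open Finset

-- auxiliary: same counts iff related by a permutation
theorem stmt8_exists_perm {α : Type*} [DecidableEq α] {n : ℕ} (f y : Fin n → α)
    (h : ∀ a, #(filter (fun i => y i = a) univ) = #(filter (fun i => f i = a) univ)) :
    ∃ π : Equiv.Perm (Fin n), ∀ i, f (π i) = y i := by
  have e : ∀ a, {i : Fin n // y i = a} ≃ {i : Fin n // f i = a} := fun a =>
    Fintype.equivOfCardEq (by
      rw [Fintype.card_subtype, Fintype.card_subtype, h a])
  refine ⟨(Equiv.sigmaFiberEquiv y).symm.trans
      ((Equiv.sigmaCongrRight e).trans (Equiv.sigmaFiberEquiv f)), fun i => ?_⟩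
  simp [Equiv.sigmaFiberEquiv, Equiv.sigmaCongrRight]
  exact (e (y i) ⟨i, rfl⟩).2

theorem stmt8_counts_comp {α : Type*} [DecidableEq α] {n : ℕ} (f : Fin n → α)
    (π : Equiv.Perm (Fin n)) (a : α) :
    #(filter (fun i => f (π i) = a) univ) = #(filter (fun i => f i = a) univ) :=
  Finset.card_equiv π (by simp)

theorem stmt8_key {α : Type*} [DecidableEq α] [Fintype α] {n : ℕ} (f : Fin n → α)
    (g : (Fin n → α) → ℝ) :
    ∑ π : Equiv.Perm (Fin n), g (f ∘ ⇑π)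
      = #(filter (fun π : Equiv.Perm (Fin n) => f ∘ ⇑π = f) univ) *
        ∑ y ∈ (univ.filter (fun y : Fin n → α =>
          ∀ a, #(filter (fun i => y i = a) univ) = #(filter (fun i => f i = a) univ))), g y := by
  rw [Finset.sum_comp g (fun π : Equiv.Perm (Fin n) => f ∘ ⇑π)]
  have himg : image (fun π : Equiv.Perm (Fin n) => f ∘ ⇑π) univ
      = univ.filter (fun y : Fin n → α =>
          ∀ a, #(filter (fun i => y i = a) univ) = #(filter (fun i => f i = a) univ)) := by
    ext y
    simp only [mem_image, mem_univ, true_and, mem_filter]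
    constructor
    · rintro ⟨π, rfl⟩
      exact fun a => stmt8_counts_comp f π a
    · intro h
      obtain ⟨π, hπ⟩ := stmt8_exists_perm f y h
      exact ⟨π, funext hπ⟩
  rw [himg]
  rw [Finset.mul_sum]
  refine Finset.sum_congr rfl fun y hy => ?_
  simp only [mem_filter, mem_univ, true_and] at hy
  obtain ⟨τ, hτ⟩ := stmt8_exists_perm f y hy
  rw [nsmul_eq_mul]
  congr 2
  refine Finset.card_equiv (Equiv.mulRight τ⁻¹) fun π => ?_
  simp only [mem_filter, mem_univ, true_and, Equiv.coe_mulRight]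
  constructor
  · intro h
    funext j
    have h1 := congrFun h (τ⁻¹ j)
    simp only [Function.comp_apply] at h1 ⊢
    rw [Equiv.Perm.mul_apply, h1, ← hτ (τ⁻¹ j), Equiv.Perm.inv_def, Equiv.apply_symm_apply]
  · intro h
    funext i
    have h1 := congrFun h (τ i)
    simp only [Function.comp_apply, Equiv.Perm.mul_apply, Equiv.Perm.coe_inv, Equiv.symm_apply_apply] at h1 ⊢
    rw [h1, hτ]

/-- On a finite alphabet with full-support distributions, the mixture
likelihood ratio equals the type-class probability ratio: for every sample `x : Fin n → 𝒳`
and every fixed labeling `σ ∈ Slam`,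
`(∑_{σ'∈Slam} ℙ_{1,σ'}{x}) / (∑_{σ'∈Slam} ℙ_{0,σ'}{x})
  = ℙ_{1,σ}(T(Π_x)) / ℙ_{0,σ}(T(Π_x))`,
where `T(Π_x)` is the set of sequences with the same empirical distribution as `x`. -/
theorem stmt_8 {𝒳 : Type*} [Fintype 𝒳] [DecidableEq 𝒳]
    (n K : ℕ) (nk : Fin K → ℕ) (hn : ∑ k, nk k = n)
    (p : Bool → Fin K → 𝒳 → ℝ)
    (hp : ∀ θ k, (∀ x, 0 < p θ k x) ∧ ∑ x, p θ k x = 1)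
    (Slam : Finset (Fin n → Fin K))
    (hSlam : Slam = Finset.univ.filter
      (fun σ => ∀ k, (Finset.univ.filter (fun i => σ i = k)).card = nk k))
    (x : Fin n → 𝒳) (σ : Fin n → Fin K) (hσ : σ ∈ Slam)
    (T : Finset (Fin n → 𝒳))
    (hT : T = Finset.univ.filter (fun y : Fin n → 𝒳 => ∀ a : 𝒳,
      (Finset.univ.filter (fun i => y i = a)).card
        = (Finset.univ.filter (fun i => x i = a)).card)) :
    (∑ σ' ∈ Slam, ∏ i, p true (σ' i) (x i)) / (∑ σ' ∈ Slam, ∏ i, p false (σ' i) (x i))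
      = (∑ y ∈ T, ∏ i, p true (σ i) (y i)) / (∑ y ∈ T, ∏ i, p false (σ i) (y i)) := by
  have hσ' : ∀ k, #(filter (fun i => σ i = k) univ) = nk k := by
    rw [hSlam] at hσ; simpa using hσ
  have hSlam' : Slam = univ.filter (fun σ' : Fin n → Fin K =>
      ∀ k, #(filter (fun i => σ' i = k) univ) = #(filter (fun i => σ i = k) univ)) := by
    rw [hSlam]
    ext σ''
    simp only [mem_filter, mem_univ, true_and]
    exact ⟨fun h k => by rw [h k, hσ' k], fun h k => by rw [h k, hσ' k]⟩
  -- the common permutation sum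
  have hF : ∀ θ, (∑ π : Equiv.Perm (Fin n), ∏ i, p θ ((σ ∘ ⇑π) i) (x i))
      = ∑ π : Equiv.Perm (Fin n), ∏ i, p θ (σ i) ((x ∘ ⇑π) i) := by
    intro θ
    calc (∑ π : Equiv.Perm (Fin n), ∏ i, p θ ((σ ∘ ⇑π) i) (x i))
        = ∑ π : Equiv.Perm (Fin n), ∏ i, p θ (σ i) (x (π⁻¹ i)) := by
          refine Finset.sum_congr rfl fun π _ => ?_
          refine Fintype.prod_equiv π _ _ fun i => ?_
          simp
      _ = ∑ π : Equiv.Perm (Fin n), ∏ i, p θ (σ i) ((x ∘ ⇑π) i) := by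
          refine Fintype.sum_equiv (Equiv.inv (Equiv.Perm (Fin n))) _ _ fun π => ?_
          simp [Function.comp]
  have key1 := fun θ => stmt8_key σ (fun σ' => ∏ i, p θ (σ' i) (x i))
  have key2 := fun θ => stmt8_key x (fun y => ∏ i, p θ (σ i) (y i))
  set cσ := #(filter (fun π : Equiv.Perm (Fin n) => σ ∘ ⇑π = σ) univ) with hcσ
  set cx := #(filter (fun π : Equiv.Perm (Fin n) => x ∘ ⇑π = x) univ) with hcx
  have hmain : ∀ θ, (cσ : ℝ) * (∑ σ' ∈ Slam, ∏ i, p θ (σ' i) (x i))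
      = (cx : ℝ) * (∑ y ∈ T, ∏ i, p θ (σ i) (y i)) := by
    intro θ
    rw [hSlam', hT]
    have k1 := key1 θ
    have k2 := key2 θ
    convert k1.symm.trans ((hF θ).trans k2) using 3
    ext z
    simp only [Finset.mem_filter]
  -- positivity
  have hσmem : σ ∈ Slam := hσ
  have hxT : x ∈ T := by rw [hT]; simp
  have hApos : (0:ℝ) < ∑ σ' ∈ Slam, ∏ i, p false (σ' i) (x i) :=
    Finset.sum_pos (fun σ' _ => Finset.prod_pos fun i _ => (hp false (σ' i)).1 (x i)) ⟨σ, hσmem⟩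
  have hBpos : (0:ℝ) < ∑ y ∈ T, ∏ i, p false (σ i) (y i) :=
    Finset.sum_pos (fun y _ => Finset.prod_pos fun i _ => (hp false (σ i)).1 (y i)) ⟨x, hxT⟩
  have hcσpos : 0 < cσ := Finset.card_pos.2
    ⟨1, Finset.mem_filter.2 ⟨Finset.mem_univ _, by simp [Function.comp_def]⟩⟩
  have hcxpos : 0 < cx := Finset.card_pos.2
    ⟨1, Finset.mem_filter.2 ⟨Finset.mem_univ _, by simp [Function.comp_def]⟩⟩
  have hcσR : (0:ℝ) < cσ := by exact_mod_cast hcσpos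
  have hcxR : (0:ℝ) < cx := by exact_mod_cast hcxpos
  have hA : ∀ θ, (∑ σ' ∈ Slam, ∏ i, p θ (σ' i) (x i))
      = ((cx : ℝ) / cσ) * (∑ y ∈ T, ∏ i, p θ (σ i) (y i)) := by
    intro θ
    have := hmain θ
    field_simp
    linarith [hmain θ]
  rw [hA true, hA false]
  exact mul_div_mul_left _ _ (ne_of_gt (div_pos hcxR hcσR))
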